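/- Let S be a finite subgroup of the generalized Pauli group G_d on ℂ^d. If no nontrivial scalar multiple of the identity lies in S (i.e., αI ∈ S implies α = 1), then the fixed subspace V_S is nonzero and dim V_S = d / |S|. -/

import Mathlib

noncomputable def omega (d : ℕ) : ℂ := Complex.exp (2 * Real.pi * Complex.I / d)

noncomputable def zeta (d : ℕ) : ℂ := Complex.exp (Real.pi * Complex.I / d)

noncomputable def shiftX (d : ℕ) [NeZero d] : Matrix (Fin d) (Fin d) ℂ :=
  fun i j => if i = j + 1 then 1 else 0

noncomputable def clockZ (d : ℕ) [NeZero d] : Matrix (Fin d) (Fin d) ℂ :=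
  Matrix.diagonal fun x => omega d ^ (x : ℕ)

section aux
variable (d : ℕ) [NeZero d]
open Fin.NatCast

lemma omega_pow_d : omega d ^ d = 1 := by
  have hd : (d : ℂ) ≠ 0 := Nat.cast_ne_zero.mpr (NeZero.ne d)
  rw [omega, ← Complex.exp_nat_mul, mul_div_cancel₀ _ hd, Complex.exp_two_pi_mul_I]

lemma shiftX_pow (p : ℕ) (i j : Fin d) :
    (shiftX d ^ p) i j = if i = j + (p : Fin d) then 1 else 0 := by
  induction p generalizing i j with
  | zero => simp [Matrix.one_apply]
  | succ p ih =>
    rw [pow_succ', Matrix.mul_apply]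
    rw [Finset.sum_eq_single (j + (p : Fin d))]
    · rw [ih]
      simp only [shiftX, if_pos rfl, mul_one]
      have : j + ((p : ℕ) + 1 : ℕ) = j + (p : Fin d) + 1 := by
        push_cast; rw [add_assoc]
      rw [this]
      simp
    · intro k _ hk
      rw [ih, if_neg hk, mul_zero]
    · simp

lemma clockZ_pow (q : ℕ) :
    clockZ d ^ q = Matrix.diagonal fun x : Fin d => omega d ^ ((x : ℕ) * q) := by
  rw [clockZ, Matrix.diagonal_pow]
  ext i j
  simp [Matrix.diagonal_apply, pow_mul]

lemma trace_XZ_or (p q : ℕ) :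
    Matrix.trace (shiftX d ^ p * clockZ d ^ q) = 0 ∨ shiftX d ^ p * clockZ d ^ q = 1 := by
  by_cases hp : (p : Fin d) = 0
  · by_cases hq : omega d ^ q = 1
    · right
      have hX : shiftX d ^ p = 1 := by
        ext i j
        rw [shiftX_pow, hp, add_zero, Matrix.one_apply]
      have hZ : clockZ d ^ q = 1 := by
        rw [clockZ_pow]
        have : (fun x : Fin d => omega d ^ ((x : ℕ) * q)) = fun _ => 1 := by
          funext x
          rw [mul_comm, pow_mul, hq, one_pow]
        rw [this, Matrix.diagonal_one]
      rw [hX, hZ, one_mul]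
    · left
      rw [clockZ_pow, Matrix.trace]
      have hdiag : ∀ i : Fin d,
          Matrix.diag (shiftX d ^ p * Matrix.diagonal fun x : Fin d => omega d ^ ((x : ℕ) * q)) i
            = (omega d ^ q) ^ (i : ℕ) := by
        intro i
        rw [Matrix.diag_apply, Matrix.mul_diagonal, shiftX_pow, hp, add_zero, if_pos rfl,
          one_mul, mul_comm, pow_mul]
      rw [Finset.sum_congr rfl fun i _ => hdiag i]
      rw [Fin.sum_univ_eq_sum_range (fun k => (omega d ^ q) ^ k)]
      rw [geom_sum_eq hq]
      rw [← pow_mul, mul_comm q d, pow_mul, omega_pow_d, one_pow, sub_self, zero_div]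
  · left
    rw [Matrix.trace]
    have hdiag : ∀ i : Fin d,
        Matrix.diag (shiftX d ^ p * clockZ d ^ q) i = 0 := by
      intro i
      rw [Matrix.diag_apply, clockZ_pow, Matrix.mul_diagonal, shiftX_pow, if_neg, zero_mul]
      intro h
      exact hp (by simpa using (left_eq_add.mp h))
    rw [Finset.sum_congr rfl fun i _ => hdiag i, Finset.sum_const_zero]

end aux

open scoped Matrix

lemma sum_mulVec' {ι : Type*} (s : Finset ι) (A : ι → Matrix (Fin d) (Fin d) ℂ)
    (v : Fin d → ℂ) : (∑ i ∈ s, A i) *ᵥ v = ∑ i ∈ s, A i *ᵥ v := by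
  ext x
  simp [Matrix.mulVec, dotProduct, Finset.sum_apply, Matrix.sum_apply, Finset.sum_mul]
  rw [Finset.sum_comm]

noncomputable def fixedSubspace (d : ℕ)
    (S : Subgroup (Matrix.GeneralLinearGroup (Fin d) ℂ)) : Submodule ℂ (Fin d → ℂ) :=
  ⨅ g ∈ S, LinearMap.ker
    (Matrix.toLin' ((g : Matrix.GeneralLinearGroup (Fin d) ℂ) : Matrix (Fin d) (Fin d) ℂ)
      - LinearMap.id)

theorem fixed_nontrivial_of_pauli_stabilizer (d : ℕ) [NeZero d]
    (S : Subgroup (Matrix.GeneralLinearGroup (Fin d) ℂ)) [Fintype S]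
    (hpauli : ∀ g ∈ S, ∃ c p q : ℕ,
      ((g : Matrix.GeneralLinearGroup (Fin d) ℂ) : Matrix (Fin d) (Fin d) ℂ)
        = zeta d ^ c • (shiftX d ^ p * clockZ d ^ q))
    (hscalar : ∀ g ∈ S, ∀ α : ℂ,
      ((g : Matrix.GeneralLinearGroup (Fin d) ℂ) : Matrix (Fin d) (Fin d) ℂ)
        = α • (1 : Matrix (Fin d) (Fin d) ℂ) → α = 1) :
    fixedSubspace d S ≠ ⊥ ∧
      Module.finrank ℂ (fixedSubspace d S) * Fintype.card S = d := by
  classical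
  have hcard0 : (Fintype.card S : ℂ) ≠ 0 := Nat.cast_ne_zero.mpr Fintype.card_ne_zero
  set Msum : Matrix (Fin d) (Fin d) ℂ :=
    ∑ g : S, ((g : Matrix.GeneralLinearGroup (Fin d) ℂ) : Matrix (Fin d) (Fin d) ℂ) with hMsum
  have hinv : ∀ h : S,
      ((h : Matrix.GeneralLinearGroup (Fin d) ℂ) : Matrix (Fin d) (Fin d) ℂ) * Msum = Msum := by
    intro h
    rw [hMsum, Finset.mul_sum]
    exact Fintype.sum_equiv (Equiv.mulLeft h) _ _ (fun g => by simp [Units.val_mul])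
  have hmem : ∀ v : Fin d → ℂ, v ∈ fixedSubspace d S ↔
      ∀ g : S, ((g : Matrix.GeneralLinearGroup (Fin d) ℂ) : Matrix (Fin d) (Fin d) ℂ) *ᵥ v = v := by
    intro v
    simp only [fixedSubspace, Submodule.mem_iInf, LinearMap.mem_ker, LinearMap.sub_apply,
      LinearMap.id_apply, sub_eq_zero, Matrix.toLin'_apply]
    exact ⟨fun h g => h g g.2, fun h g hg => h ⟨g, hg⟩⟩
  have hsum_fix : ∀ v ∈ fixedSubspace d S, Msum *ᵥ v = (Fintype.card S : ℂ) • v := by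
    intro v hv
    rw [hMsum, sum_mulVec', Finset.sum_congr rfl fun g _ => (hmem v).mp hv g,
      Finset.sum_const, Finset.card_univ, Nat.cast_smul_eq_nsmul]
  set M : Matrix (Fin d) (Fin d) ℂ := (Fintype.card S : ℂ)⁻¹ • Msum with hM
  have hproj : LinearMap.IsProj (fixedSubspace d S) (Matrix.toLin' M) := by
    constructor
    · intro x
      rw [hmem]
      intro g
      rw [Matrix.toLin'_apply, hM, Matrix.smul_mulVec, Matrix.mulVec_smul,
        Matrix.mulVec_mulVec, hinv g]
    · intro x hx
      rw [Matrix.toLin'_apply, hM, Matrix.smul_mulVec, hsum_fix x hx, smul_smul,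
        inv_mul_cancel₀ hcard0, one_smul]
  have htrace_lin : LinearMap.trace ℂ (Fin d → ℂ) (Matrix.toLin' M) = Matrix.trace M := by
    rw [LinearMap.trace_eq_matrix_trace ℂ (Pi.basisFun ℂ (Fin d)),
      LinearMap.toMatrix_eq_toMatrix', LinearMap.toMatrix'_toLin']
  have hzero : ∀ g : S, g ≠ 1 →
      Matrix.trace ((g : Matrix.GeneralLinearGroup (Fin d) ℂ) : Matrix (Fin d) (Fin d) ℂ) = 0 := by
    intro g hg
    obtain ⟨c, p, q, hgeq⟩ := hpauli g g.2
    rcases trace_XZ_or d p q with h0 | h1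
    · rw [hgeq, Matrix.trace_smul, h0, smul_zero]
    · exfalso
      apply hg
      have hsc : zeta d ^ c = 1 := hscalar g g.2 (zeta d ^ c) (by rw [hgeq, h1])
      have : ((g : Matrix.GeneralLinearGroup (Fin d) ℂ) : Matrix (Fin d) (Fin d) ℂ) = 1 := by
        rw [hgeq, h1, hsc, one_smul]
      exact Subtype.ext (Units.ext this)
  have htr : Matrix.trace Msum = (d : ℂ) := by
    rw [hMsum, Matrix.trace_sum, Finset.sum_eq_single (1 : S)]
    · simp [Matrix.trace_one]
    · exact fun g _ hg => hzero g hg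
    · exact fun h => absurd (Finset.mem_univ _) h
  have hfr : (Module.finrank ℂ (fixedSubspace d S) : ℂ) * (Fintype.card S : ℂ) = (d : ℂ) := by
    have h1 := hproj.trace
    rw [htrace_lin, hM, Matrix.trace_smul, htr, smul_eq_mul] at h1
    rw [← h1]
    field_simp
  have hnat : Module.finrank ℂ (fixedSubspace d S) * Fintype.card S = d := by
    exact_mod_cast hfr
  refine ⟨?_, hnat⟩
  intro hbot
  rw [hbot, finrank_bot, zero_mul] at hnat
  exact NeZero.ne d hnat.symm
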